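/- Let $T = (V, E)$ be a finite tree with a path-additive positive edge distance $d$, observed set $X \subseteq V$, and surrogate map $\mathrm{Sg} : V \to X$ assigning each node its closest observed node (assumed unique). Then for any edge $(h_i, h_j) \in E$, either $\mathrm{Sg}(h_i) = \mathrm{Sg}(h_j)$, or $\mathrm{Sg}(h_i)$ and $\mathrm{Sg}(h_j)$ are connected by an edge in the minimum spanning tree of $X$ under the distance $d$ restricted to $X \times X$ (assuming the MST under $d|_{X\times X}$ is unique). -/

import Mathlib

open Classical

/-- `c` lies on the (unique) path from `a` to `b` in `G`. -/
def SimpleGraph.OnPath {V : Type*} (G : SimpleGraph V) (a b c : V) : Prop :=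
  ∀ p : G.Walk a b, p.IsPath → c ∈ p.support

/-- The total weight of a graph `H` with respect to an edge weight `d`
(each edge is counted twice, once in each direction). -/
noncomputable def treeWeight {V : Type*} [Fintype V] (d : V → V → ℝ)
    (H : SimpleGraph V) : ℝ :=
  ∑ p : V × V, if H.Adj p.1 p.2 then d p.1 p.2 else 0

section Aux

open SimpleGraph

variable {V : Type*} {G : SimpleGraph V}

lemma aux_onPath_symm {a b c : V} (h : G.OnPath a b c) : G.OnPath b a c := fun p hp => by
  have := h p.reverse hp.reverse
  simpa using this

lemma aux_bridge (hT : G.IsTree) {a b : V} (hab : G.Adj a b) :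
    ¬ (G.deleteEdges {s(a, b)}).Reachable a b := by
  have hbr : G.IsBridge s(a, b) :=
    (SimpleGraph.isAcyclic_iff_forall_adj_isBridge.mp hT.2) hab
  exact SimpleGraph.isBridge_iff.mp hbr

lemma aux_cover (hT : G.IsTree) {a b : V} (hab : G.Adj a b) (v : V) :
    (G.deleteEdges {s(a, b)}).Reachable a v ∨ (G.deleteEdges {s(a, b)}).Reachable b v := by
  obtain ⟨p, hp, -⟩ := hT.existsUnique_path a v
  by_cases he : s(a, b) ∈ p.edges
  · right
    cases p with
    | nil => simp at he
    | @cons _ w _ h q =>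
      rw [Walk.edges_cons] at he
      have hp' := (Walk.cons_isPath_iff h q).mp hp
      rcases List.mem_cons.mp he with h1 | h1
      · have hbw : b = w := Sym2.congr_right.mp h1
        subst hbw
        refine ⟨q.toDeleteEdges _ ?_⟩
        intro e he' hmem
        rw [Set.mem_singleton_iff] at hmem
        subst hmem
        exact hp'.2 (q.fst_mem_support_of_mem_edges he')
      · exact absurd (q.fst_mem_support_of_mem_edges h1) hp'.2
  · left
    exact ⟨p.toDeleteEdges _ (fun e he' hmem => he (Set.mem_singleton_iff.mp hmem ▸ he'))⟩

lemma aux_onPath (hT : G.IsTree) {a b : V} (hab : G.Adj a b) {u v : V}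
    (hu : (G.deleteEdges {s(a, b)}).Reachable a u)
    (hv : (G.deleteEdges {s(a, b)}).Reachable b v) :
    G.OnPath u v a := by
  intro p hp
  by_contra ha
  have hne : ∀ e ∈ p.edges, e ∉ ({s(a, b)} : Set (Sym2 V)) := by
    intro e he hmem
    rw [Set.mem_singleton_iff] at hmem
    subst hmem
    exact ha (p.fst_mem_support_of_mem_edges he)
  have hr : (G.deleteEdges {s(a, b)}).Reachable u v := ⟨p.toDeleteEdges _ hne⟩
  exact aux_bridge hT hab (hu.trans (hr.trans hv.symm))

lemma aux_onPath' (hT : G.IsTree) {a b : V} (hab : G.Adj a b) {u v : V}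
    (hu : (G.deleteEdges {s(a, b)}).Reachable a u)
    (hv : (G.deleteEdges {s(a, b)}).Reachable b v) :
    G.OnPath u v b := by
  have hset : G.deleteEdges {s(b, a)} = G.deleteEdges {s(a, b)} := by
    rw [Sym2.eq_swap]
  exact aux_onPath_symm (aux_onPath hT hab.symm (hset ▸ hv) (hset ▸ hu))

lemma aux_cross {W : Type*} {H : SimpleGraph W} (S : Set W) {s t : W} (p : H.Walk s t) :
    s ∈ S → t ∉ S → ∃ u v, H.Adj u v ∧ s(u, v) ∈ p.edges ∧ u ∈ S ∧ v ∉ S := by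
  induction p with
  | nil => intro hs ht; exact absurd hs ht
  | @cons a w t' h q ih =>
    intro hs ht
    by_cases hw : w ∈ S
    · obtain ⟨u, v, h1, h2, h3, h4⟩ := ih hw ht
      exact ⟨u, v, h1, by rw [Walk.edges_cons]; exact List.mem_cons_of_mem _ h2, h3, h4⟩
    · exact ⟨a, w, h, by rw [Walk.edges_cons]; exact List.mem_cons_self, hs, hw⟩

lemma aux_sg_side (hT : G.IsTree) {d : V → V → ℝ}
    (hsymm : ∀ u v : V, d u v = d v u)
    (hadd : ∀ a b c : V, G.OnPath a b c → d a b = d a c + d c b)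
    (hpos : ∀ u v : V, G.Adj u v → 0 < d u v)
    {X : Set V} {Sg : V → V} (hSgX : ∀ v : V, Sg v ∈ X)
    (hSgmin : ∀ (v x : V), x ∈ X → x ≠ Sg v → d v (Sg v) < d v x)
    {hi hj : V} (hij : G.Adj hi hj) (hss : Sg hi ≠ Sg hj) :
    (G.deleteEdges {s(hi, hj)}).Reachable hi (Sg hi) := by
  by_contra hxA
  have hxB : (G.deleteEdges {s(hi, hj)}).Reachable hj (Sg hi) :=
    (aux_cover hT hij (Sg hi)).resolve_left hxA
  have e2 : d hi (Sg hi) = d hi hj + d hj (Sg hi) :=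
    hadd hi (Sg hi) hj (aux_onPath' hT hij (Reachable.refl hi) hxB)
  have i1 : d hj (Sg hj) < d hj (Sg hi) := hSgmin hj (Sg hi) (hSgX hi) hss
  have i2 : d hi (Sg hi) < d hi (Sg hj) := hSgmin hi (Sg hj) (hSgX hj) (Ne.symm hss)
  rcases aux_cover hT hij (Sg hj) with hyA | hyB
  · have e1 : d hj (Sg hj) = d hj hi + d hi (Sg hj) :=
      hadd hj (Sg hj) hi (aux_onPath_symm (aux_onPath hT hij hyA (Reachable.refl hj)))
    have hp := hpos hi hj hij
    have hs := hsymm hj hi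
    linarith
  · have e3 : d hi (Sg hj) = d hi hj + d hj (Sg hj) :=
      hadd hi (Sg hj) hj (aux_onPath' hT hij (Reachable.refl hi) hyB)
    linarith

end Aux

/-- MST surrogate neighborhood preservation: contracting hidden nodes of the
latent tree to their (unique closest observed) surrogates respects the unique
minimum spanning tree over the observed nodes.  For every edge `(h_i, h_j)` of
the latent tree, either the surrogates coincide, or they are adjacent in the
MST of the observed nodes under the additive distance `d`. -/
theorem mst_surrogate_neighborhood_preservation
    {V : Type*} [Fintype V] (G : SimpleGraph V) (hT : G.IsTree)
    (d : V → V → ℝ)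
    (hsymm : ∀ u v : V, d u v = d v u)
    (hadd : ∀ a b c : V, G.OnPath a b c → d a b = d a c + d c b)
    (hpos : ∀ u v : V, G.Adj u v → 0 < d u v)
    (X : Set V)
    (Sg : V → V) (hSgX : ∀ v : V, Sg v ∈ X)
    (hSgmin : ∀ (v x : V), x ∈ X → x ≠ Sg v → d v (Sg v) < d v x)
    (M : SimpleGraph {v // v ∈ X}) (hM : M.IsTree)
    -- `M` is a minimum weight spanning tree over `X` ...
    (hMmin : ∀ H : SimpleGraph {v // v ∈ X}, H.IsTree →
      treeWeight (fun u v => d u.1 v.1) M ≤ treeWeight (fun u v => d u.1 v.1) H)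
    -- ... and it is the unique one
    (hMuniq : ∀ H : SimpleGraph {v // v ∈ X}, H.IsTree →
      treeWeight (fun u v => d u.1 v.1) H = treeWeight (fun u v => d u.1 v.1) M →
        H = M) :
    ∀ hi hj : V, G.Adj hi hj →
      Sg hi = Sg hj ∨ M.Adj ⟨Sg hi, hSgX hi⟩ ⟨Sg hj, hSgX hj⟩ := by
  classical
  intro hi hj hij
  by_cases hss : Sg hi = Sg hj
  · exact Or.inl hss
  right
  by_contra hadjM
  have hx : (G.deleteEdges {s(hi, hj)}).Reachable hi (Sg hi) :=
    aux_sg_side hT hsymm hadd hpos hSgX hSgmin hij hss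
  have hy : (G.deleteEdges {s(hi, hj)}).Reachable hj (Sg hj) := by
    have hset : G.deleteEdges {s(hj, hi)} = G.deleteEdges {s(hi, hj)} := by
      rw [Sym2.eq_swap]
    have := aux_sg_side hT hsymm hadd hpos hSgX hSgmin hij.symm (Ne.symm hss)
    rwa [hset] at this
  -- the key strict inequality across the cut
  have key : ∀ u v : V, u ∈ X → v ∈ X →
      (G.deleteEdges {s(hi, hj)}).Reachable hi u →
      (G.deleteEdges {s(hi, hj)}).Reachable hj v →
      ¬(u = Sg hi ∧ v = Sg hj) → d (Sg hi) (Sg hj) < d u v := by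
    intro u v hu hv hru hrv hne
    have e1 : d u v = d u hi + d hi v := hadd u v hi (aux_onPath hT hij hru hrv)
    have e2 : d hi v = d hi hj + d hj v :=
      hadd hi v hj (aux_onPath' hT hij (SimpleGraph.Reachable.refl hi) hrv)
    have e3 : d (Sg hi) (Sg hj) = d (Sg hi) hi + d hi (Sg hj) :=
      hadd _ _ hi (aux_onPath hT hij hx hy)
    have e4 : d hi (Sg hj) = d hi hj + d hj (Sg hj) :=
      hadd _ _ hj (aux_onPath' hT hij (SimpleGraph.Reachable.refl hi) hy)
    have l1 : d hi (Sg hi) ≤ d hi u := by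
      by_cases h : u = Sg hi
      · rw [h]
      · exact le_of_lt (hSgmin hi u hu h)
    have l2 : d hj (Sg hj) ≤ d hj v := by
      by_cases h : v = Sg hj
      · rw [h]
      · exact le_of_lt (hSgmin hj v hv h)
    have s1 := hsymm u hi
    have s2 := hsymm (Sg hi) hi
    rcases not_and_or.mp hne with h | h
    · have l1' : d hi (Sg hi) < d hi u := hSgmin hi u hu h
      linarith
    · have l2' : d hj (Sg hj) < d hj v := hSgmin hj v hv h
      linarith
  -- set up the observed-tree side
  set x' : {v // v ∈ X} := ⟨Sg hi, hSgX hi⟩ with hx'def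
  set y' : {v // v ∈ X} := ⟨Sg hj, hSgX hj⟩ with hy'def
  have hxy' : x' ≠ y' := fun h => hss (congrArg Subtype.val h)
  set S : Set {v // v ∈ X} := {w | (G.deleteEdges {s(hi, hj)}).Reachable hi w.1} with hSdef
  have hx'S : x' ∈ S := hx
  have hy'S : y' ∉ S := by
    intro h
    exact aux_bridge hT hij (SimpleGraph.Reachable.trans h hy.symm)
  obtain ⟨P, hP, hPu⟩ := hM.existsUnique_path x' y'
  obtain ⟨u, v, huv, hmem, huS, hvS⟩ := aux_cross S P hx'S hy'S
  have hruS : (G.deleteEdges {s(hi, hj)}).Reachable hi u.1 := huS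
  have hrvS : (G.deleteEdges {s(hi, hj)}).Reachable hj v.1 :=
    (aux_cover hT hij v.1).resolve_left hvS
  have hpair : ¬(u = x' ∧ v = y') := fun ⟨h1, h2⟩ => hadjM (h1 ▸ h2 ▸ huv)
  have hpair' : ¬(u.1 = Sg hi ∧ v.1 = Sg hj) :=
    fun ⟨h1, h2⟩ => hpair ⟨Subtype.ext h1, Subtype.ext h2⟩
  have dlt : d (Sg hi) (Sg hj) < d u.1 v.1 := key u.1 v.1 u.2 v.2 hruS hrvS hpair'
  have hne_uy : u ≠ y' := fun h => hy'S (h ▸ huS)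
  have hne_vx : v ≠ x' := fun h => hvS (h ▸ hx'S)
  -- separation in M after deleting the crossing edge
  have hsep : ¬ (M.deleteEdges {s(u, v)}).Reachable x' y' := by
    rintro ⟨w⟩
    have hw : ∀ e ∈ w.edges, e ∈ M.edgeSet := fun e he =>
      SimpleGraph.edgeSet_mono (M.deleteEdges_le _) (w.edges_subset_edgeSet he)
    have hw' : s(u, v) ∉ (w.transfer M hw).edges := by
      rw [SimpleGraph.Walk.edges_transfer]
      intro h
      have := w.edges_subset_edgeSet h
      rw [SimpleGraph.edgeSet_deleteEdges] at this
      exact this.2 rfl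
    have hbp : (w.transfer M hw).bypass = P :=
      hPu (w.transfer M hw).bypass ((w.transfer M hw).bypass_isPath)
    exact hw' (SimpleGraph.Walk.edges_bypass_subset _ (hbp ▸ hmem))
  -- find the sides of x' and y' relative to the deleted edge
  have hor : ((M.deleteEdges {s(u, v)}).Reachable u x' ∧ (M.deleteEdges {s(u, v)}).Reachable v y') ∨
      ((M.deleteEdges {s(u, v)}).Reachable v x' ∧ (M.deleteEdges {s(u, v)}).Reachable u y') := by
    rcases aux_cover hM huv x' with hxu | hxv <;> rcases aux_cover hM huv y' with hyu | hyv
    · exact absurd (hxu.symm.trans hyu) hsep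
    · exact Or.inl ⟨hxu, hyv⟩
    · exact Or.inr ⟨hxv, hyu⟩
    · exact absurd (hxv.symm.trans hyv) hsep
  set M' : SimpleGraph {v // v ∈ X} :=
    M.deleteEdges {s(u, v)} ⊔ SimpleGraph.fromEdgeSet {s(x', y')} with hM'def
  have hMdle : M.deleteEdges {s(u, v)} ≤ M' := le_sup_left
  have hM'xy : M'.Adj x' y' :=
    (SimpleGraph.sup_adj _ _ _ _).mpr (Or.inr ((SimpleGraph.fromEdgeSet_adj _).mpr ⟨rfl, hxy'⟩))
  have hanchor : ∀ c : {v // v ∈ X},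
      (M.deleteEdges {s(u, v)}).Reachable c x' ∨ (M.deleteEdges {s(u, v)}).Reachable c y' := by
    intro c
    rcases aux_cover hM huv c with hcu | hcv
    · rcases hor with ⟨h1, h2⟩ | ⟨h1, h2⟩
      · exact Or.inl (hcu.symm.trans h1)
      · exact Or.inr (hcu.symm.trans h2)
    · rcases hor with ⟨h1, h2⟩ | ⟨h1, h2⟩
      · exact Or.inr (hcv.symm.trans h2)
      · exact Or.inl (hcv.symm.trans h1)
  have hconn : M'.Connected := by
    have hto : ∀ c : {v // v ∈ X}, M'.Reachable c x' := by
      intro c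
      rcases hanchor c with h | h
      · exact h.mono hMdle
      · exact (h.mono hMdle).trans hM'xy.symm.reachable
    have hne : Nonempty {v // v ∈ X} := ⟨x'⟩
    exact SimpleGraph.Connected.mk (fun p q => (hto p).trans (hto q).symm)
  have hacy : M'.IsAcyclic := by
    intro a c hc
    by_cases he : s(x', y') ∈ c.edges
    · have hr : (M' \ SimpleGraph.fromEdgeSet {s(x', y')}).Reachable x' y' :=
        ((SimpleGraph.adj_and_reachable_delete_edges_iff_exists_cycle (G := M')).mpr
          ⟨a, c, hc, he⟩).2
      have hle : (M' \ SimpleGraph.fromEdgeSet {s(x', y')}) ≤ M.deleteEdges {s(u, v)} := by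
        intro p q hpq
        rw [SimpleGraph.sdiff_adj] at hpq
        rcases (SimpleGraph.sup_adj _ _ _ _).mp hpq.1 with h | h
        · exact h
        · exact absurd h hpq.2
      exact hsep (hr.mono hle)
    · have hce : ∀ e ∈ c.edges, e ∈ M.edgeSet := by
        intro e hec
        have hee := c.edges_subset_edgeSet hec
        rw [hM'def, SimpleGraph.edgeSet_sup] at hee
        rcases hee with h | h
        · rw [SimpleGraph.edgeSet_deleteEdges] at h
          exact h.1
        · rw [SimpleGraph.edgeSet_fromEdgeSet] at h
          rcases h with ⟨h1, -⟩
          rw [Set.mem_singleton_iff] at h1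
          exact absurd (h1 ▸ hec) he
      exact hM.2 (c.transfer M hce) (hc.transfer hce)
  have hM'tree : M'.IsTree := ⟨hconn, hacy⟩
  -- adjacency characterization of M'
  have hM'adj : ∀ p q : {v // v ∈ X},
      M'.Adj p q ↔ (M.Adj p q ∧ s(p, q) ≠ s(u, v)) ∨ s(p, q) = s(x', y') := by
    intro p q
    constructor
    · intro h
      rcases (SimpleGraph.sup_adj _ _ _ _).mp h with h | h
      · rw [SimpleGraph.deleteEdges_adj] at h
        exact Or.inl ⟨h.1, by simpa using h.2⟩
      · exact Or.inr ((SimpleGraph.fromEdgeSet_adj _).mp h).1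
    · rintro (⟨h1, h2⟩ | h)
      · exact (SimpleGraph.sup_adj _ _ _ _).mpr
          (Or.inl (SimpleGraph.deleteEdges_adj.mpr ⟨h1, by simpa using h2⟩))
      · refine (SimpleGraph.sup_adj _ _ _ _).mpr (Or.inr ((SimpleGraph.fromEdgeSet_adj _).mpr ⟨h, ?_⟩))
        intro hpq
        subst hpq
        rcases Sym2.eq_iff.mp h with ⟨h1, h2⟩ | ⟨h1, h2⟩ <;>
          first
          | exact hxy' (h1.symm.trans h2)
          | exact hxy' (h2.symm.trans h1)
  -- values of the two indicators at the four special pairs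
  have hfM'uv : ¬ M'.Adj u v := by
    rw [hM'adj]
    rintro (⟨-, h⟩ | h)
    · exact h rfl
    · rcases Sym2.eq_iff.mp h with ⟨h1, h2⟩ | ⟨h1, h2⟩
      · exact hpair ⟨h1, h2⟩
      · exact hne_uy h1
  have hfM'vu : ¬ M'.Adj v u := fun h => hfM'uv h.symm
  have hadjM' : ¬ M.Adj y' x' := fun h => hadjM h.symm
  have htM'yx : M'.Adj y' x' := hM'xy.symm
  -- the four pairs are distinct
  have hne_uv : u ≠ v := huv.ne
  -- sum comparison
  set d' : {v // v ∈ X} → {v // v ∈ X} → ℝ := fun p q => d p.1 q.1 with hd'def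
  set F : ({v // v ∈ X} × {v // v ∈ X}) → ℝ := fun p =>
    (if M'.Adj p.1 p.2 then d' p.1 p.2 else 0) - (if M.Adj p.1 p.2 then d' p.1 p.2 else 0)
    with hFdef
  set s4 : Finset ({v // v ∈ X} × {v // v ∈ X}) :=
    {(u, v), (v, u), (x', y'), (y', x')} with hs4def
  have hvanish : ∀ p ∈ (Finset.univ : Finset ({v // v ∈ X} × {v // v ∈ X})),
      p ∉ s4 → F p = 0 := by
    intro p _ hp
    rw [hs4def] at hp
    simp only [Finset.mem_insert, Finset.mem_singleton] at hp
    push_neg at hp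
    obtain ⟨hp1, hp2, hp3, hp4⟩ := hp
    have hiff : M'.Adj p.1 p.2 ↔ M.Adj p.1 p.2 := by
      rw [hM'adj]
      constructor
      · rintro (⟨h, -⟩ | h)
        · exact h
        · exfalso
          rcases Sym2.eq_iff.mp h with ⟨h1, h2⟩ | ⟨h1, h2⟩
          · exact hp3 (Prod.ext h1 h2)
          · exact hp4 (Prod.ext h1 h2)
      · intro h
        refine Or.inl ⟨h, ?_⟩
        intro hs
        rcases Sym2.eq_iff.mp hs with ⟨h1, h2⟩ | ⟨h1, h2⟩
        · exact hp1 (Prod.ext h1 h2)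
        · exact hp2 (Prod.ext h1 h2)
    rw [hFdef]
    simp only [hiff, sub_self]
  have hm1 : (u, v) ∉ ({(v, u), (x', y'), (y', x')} :
      Finset ({v // v ∈ X} × {v // v ∈ X})) := by
    simp only [Finset.mem_insert, Finset.mem_singleton, Prod.mk.injEq]
    push_neg
    refine ⟨fun h _ => hne_uv h, fun h1 h2 => hpair ⟨h1, h2⟩, fun h _ => hne_uy h⟩
  have hm2 : (v, u) ∉ ({(x', y'), (y', x')} :
      Finset ({v // v ∈ X} × {v // v ∈ X})) := by
    simp only [Finset.mem_insert, Finset.mem_singleton, Prod.mk.injEq]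
    push_neg
    exact ⟨fun h _ => hne_vx h, fun _ h2 => hpair ⟨h2, by assumption⟩⟩
  have hm3 : (x', y') ∉ ({(y', x')} : Finset ({v // v ∈ X} × {v // v ∈ X})) := by
    simp only [Finset.mem_singleton, Prod.mk.injEq]
    exact fun ⟨h, _⟩ => hxy' h
  have hsum4 : ∑ p ∈ s4, F p =
      F (u, v) + (F (v, u) + (F (x', y') + F (y', x'))) := by
    rw [hs4def]
    rw [Finset.sum_insert hm1, Finset.sum_insert hm2, Finset.sum_insert hm3,
      Finset.sum_singleton]
  have hFuv : F (u, v) = -(d u.1 v.1) := by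
    rw [hFdef]
    simp only [if_neg hfM'uv, if_pos huv]
    ring
  have hFvu : F (v, u) = -(d v.1 u.1) := by
    rw [hFdef]
    simp only [if_neg hfM'vu, if_pos huv.symm]
    ring
  have hFxy : F (x', y') = d (Sg hi) (Sg hj) := by
    rw [hFdef]
    simp only [if_pos hM'xy, if_neg hadjM]
    ring
  have hFyx : F (y', x') = d (Sg hj) (Sg hi) := by
    rw [hFdef]
    simp only [if_pos htM'yx, if_neg hadjM']
    ring
  have hsumall : ∑ p : {v // v ∈ X} × {v // v ∈ X}, F p = ∑ p ∈ s4, F p :=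
    (Finset.sum_subset (Finset.subset_univ s4) hvanish).symm
  have hsub : ∑ p : {v // v ∈ X} × {v // v ∈ X}, F p =
      treeWeight d' M' - treeWeight d' M := by
    rw [treeWeight, treeWeight, ← Finset.sum_sub_distrib]
    simp only [hFdef]
    exact Finset.sum_congr rfl fun p _ => by congr!
  have hlt : treeWeight d' M' < treeWeight d' M := by
    have hs1 := hsymm u.1 v.1
    have hs2 := hsymm (Sg hi) (Sg hj)
    have : treeWeight d' M' - treeWeight d' M =
        F (u, v) + (F (v, u) + (F (x', y') + F (y', x'))) := by
      rw [← hsub, hsumall, hsum4]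
    rw [hFuv, hFvu, hFxy, hFyx] at this
    linarith
  exact absurd (hMmin M' hM'tree) (not_le.mpr hlt)
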